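/- For any distribution ρ on spanning trees with κ(G,ρ) := min_e ρ_e > 0, and non-negative weights and potentials, U_ρ(θ) ≤ L_ρ(θ)/κ(G,ρ), where L_ρ(θ) = Σ_T ρ^T Φ(Π^T(θ)) and U_ρ(θ) = Σ_T ρ^T Φ(Π^T_ρ(θ)). -/
import Mathlib


open scoped Classical

/-- The log-partition function of a pairwise graphical model on the graph `G`. -/
noncomputable def logPartitionFn {V X : Type*} [Fintype V] [DecidableEq V] [Fintype X]
    (G : SimpleGraph V) [DecidableRel G.Adj]
    (ψ : Sym2 V → (V → X) → ℝ) (θ : Sym2 V → ℝ) : ℝ :=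
  Real.log (∑ x : V → X, Real.exp (∑ e ∈ G.edgeFinset, θ e * ψ e x))

lemma log_sum_rpow_le {α : Type*} [Fintype α] [Nonempty α] (c : ℝ) (hc : 1 ≤ c)
    (a : α → ℝ) (ha : ∀ x, 0 < a x) :
    Real.log (∑ x, (a x) ^ c) ≤ c * Real.log (∑ x, a x) := by
  have hS : 0 < ∑ x, a x := Finset.sum_pos (fun x _ => ha x) Finset.univ_nonempty
  have key : ∑ x, (a x) ^ c ≤ (∑ x, a x) ^ c := by
    have h1 : ∀ x : α, (a x) ^ c ≤ (∑ y, a y) ^ (c - 1) * a x := by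
      intro x
      have hx : a x ≤ ∑ y, a y :=
        Finset.single_le_sum (fun y _ => (ha y).le) (Finset.mem_univ x)
      calc (a x) ^ c = (a x) ^ (c - 1 + 1) := by ring_nf
        _ = (a x) ^ (c - 1) * a x := by
            rw [Real.rpow_add (ha x), Real.rpow_one]
        _ ≤ (∑ y, a y) ^ (c - 1) * a x := by
            apply mul_le_mul_of_nonneg_right _ (ha x).le
            exact Real.rpow_le_rpow (ha x).le hx (by linarith)
    calc ∑ x, (a x) ^ c ≤ ∑ x, (∑ y, a y) ^ (c - 1) * a x :=
          Finset.sum_le_sum (fun x _ => h1 x)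
      _ = (∑ y, a y) ^ (c - 1) * ∑ x, a x := by rw [← Finset.mul_sum]
      _ = (∑ y, a y) ^ c := by
          nth_rewrite 2 [← Real.rpow_one (∑ y, a y)]
          rw [← Real.rpow_add hS]; ring_nf
  have hpos : 0 < ∑ x, (a x) ^ c :=
    Finset.sum_pos (fun x _ => Real.rpow_pos_of_pos (ha x) c) Finset.univ_nonempty
  calc Real.log (∑ x, (a x) ^ c) ≤ Real.log ((∑ x, a x) ^ c) :=
        Real.log_le_log hpos key
    _ = c * Real.log (∑ x, a x) := Real.log_rpow hS c

lemma logPartitionFn_mono {V X : Type*} [Fintype V] [DecidableEq V] [Fintype X] [Nonempty X]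
    (G : SimpleGraph V) [DecidableRel G.Adj]
    (ψ : Sym2 V → (V → X) → ℝ) (hψ : ∀ e x, 0 ≤ ψ e x)
    (θ₁ θ₂ : Sym2 V → ℝ) (h : ∀ e, θ₁ e ≤ θ₂ e) :
    logPartitionFn G ψ θ₁ ≤ logPartitionFn G ψ θ₂ := by
  unfold logPartitionFn
  apply Real.log_le_log
  · exact Finset.sum_pos (fun x _ => Real.exp_pos _) Finset.univ_nonempty
  · apply Finset.sum_le_sum
    intro x _
    apply Real.exp_le_exp.2
    apply Finset.sum_le_sum
    intro e _
    exact mul_le_mul_of_nonneg_right (h e) (hψ e x)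

lemma logPartitionFn_smul_le {V X : Type*} [Fintype V] [DecidableEq V] [Fintype X] [Nonempty X]
    (G : SimpleGraph V) [DecidableRel G.Adj]
    (ψ : Sym2 V → (V → X) → ℝ) (θ : Sym2 V → ℝ) (c : ℝ) (hc : 1 ≤ c) :
    logPartitionFn G ψ (fun e => c * θ e) ≤ c * logPartitionFn G ψ θ := by
  unfold logPartitionFn
  have h1 : ∀ x : V → X,
      Real.exp (∑ e ∈ G.edgeFinset, c * θ e * ψ e x)
        = (Real.exp (∑ e ∈ G.edgeFinset, θ e * ψ e x)) ^ c := by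
    intro x
    rw [Real.rpow_def_of_pos (Real.exp_pos _), Real.log_exp, Finset.sum_mul]
    congr 1
    apply Finset.sum_congr rfl
    intro e _
    ring
  simp_rw [h1]
  exact log_sum_rpow_le c hc _ (fun x => Real.exp_pos _)

/-- For any distribution `ρ` on spanning trees with `κ(G,ρ) = min_e ρ_e > 0`, and
non-negative weights and potentials, `U_ρ(θ) ≤ L_ρ(θ)/κ(G,ρ)`. -/
theorem trw_upper_le_lower_div_kappa
    {V X : Type*} [Fintype V] [DecidableEq V] [Fintype X] [Nonempty X]
    (G : SimpleGraph V) [DecidableRel G.Adj] (hG : G.Connected)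
    (hE : G.edgeFinset.Nonempty)
    (ψ : Sym2 V → (V → X) → ℝ) (hψ : ∀ e x, 0 ≤ ψ e x)
    (hpair : ∀ e ∈ G.edgeSet, ∀ x y : V → X, (∀ v ∈ e, x v = y v) → ψ e x = ψ e y)
    (θ : Sym2 V → ℝ) (hθ : ∀ e, 0 ≤ θ e)
    {ι : Type*} [Fintype ι] (Tr : ι → SimpleGraph V)
    (hsub : ∀ i, Tr i ≤ G) (htree : ∀ i, (Tr i).IsTree)
    (ρ : ι → ℝ) (hρ0 : ∀ i, 0 ≤ ρ i) (hρ1 : ∑ i, ρ i = 1)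
    (κ : ℝ)
    (hκ : κ = G.edgeFinset.inf' hE
      (fun e => ∑ i, ρ i * (if e ∈ (Tr i).edgeSet then (1 : ℝ) else 0)))
    (hκpos : 0 < κ) :
    ∑ i, ρ i * logPartitionFn G ψ (fun e =>
        if e ∈ (Tr i).edgeSet then
          θ e / (∑ j, ρ j * (if e ∈ (Tr j).edgeSet then (1 : ℝ) else 0))
        else 0)
      ≤ (∑ i, ρ i * logPartitionFn G ψ (fun e =>
          if e ∈ (Tr i).edgeSet then θ e else 0)) / κ := by
  set ρe : Sym2 V → ℝ := fun e => ∑ j, ρ j * (if e ∈ (Tr j).edgeSet then (1 : ℝ) else 0)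
    with hρe
  -- κ ≤ ρ_e for edges of G
  have hκle : ∀ e ∈ G.edgeFinset, κ ≤ ρe e := by
    intro e he
    rw [hκ]
    exact Finset.inf'_le _ he
  -- κ ≤ 1
  have hκ1 : κ ≤ 1 := by
    obtain ⟨e, he⟩ := hE
    refine le_trans (hκle e he) ?_
    calc ρe e ≤ ∑ j, ρ j := by
          apply Finset.sum_le_sum
          intro j _
          by_cases h : e ∈ (Tr j).edgeSet <;> simp [h, hρ0 j]
      _ = 1 := hρ1
  have hcinv : (1 : ℝ) ≤ κ⁻¹ := by
    rw [le_inv_comm₀ one_pos hκpos]; simpa using hκ1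
  -- per-tree inequality
  have hkey : ∀ i, logPartitionFn G ψ (fun e =>
      if e ∈ (Tr i).edgeSet then θ e / ρe e else 0)
      ≤ κ⁻¹ * logPartitionFn G ψ (fun e => if e ∈ (Tr i).edgeSet then θ e else 0) := by
    intro i
    have h1 : logPartitionFn G ψ (fun e => if e ∈ (Tr i).edgeSet then θ e / ρe e else 0)
        ≤ logPartitionFn G ψ
          (fun e => κ⁻¹ * (if e ∈ (Tr i).edgeSet then θ e else 0)) := by
      apply logPartitionFn_mono G ψ hψ
      intro e
      by_cases he : e ∈ (Tr i).edgeSet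
      · simp only [he, if_true]
        have heG : e ∈ G.edgeFinset := by
          rw [SimpleGraph.mem_edgeFinset]
          exact SimpleGraph.edgeSet_mono (hsub i) he
        have hκρe : κ ≤ ρe e := hκle e heG
        rw [div_eq_inv_mul]
        apply mul_le_mul_of_nonneg_right _ (hθ e)
        exact inv_anti₀ hκpos hκρe
      · simp [he]
    exact h1.trans (logPartitionFn_smul_le G ψ _ κ⁻¹ hcinv)
  calc ∑ i, ρ i * logPartitionFn G ψ (fun e =>
          if e ∈ (Tr i).edgeSet then θ e / ρe e else 0)
      ≤ ∑ i, ρ i * (κ⁻¹ * logPartitionFn G ψ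
          (fun e => if e ∈ (Tr i).edgeSet then θ e else 0)) := by
        apply Finset.sum_le_sum
        intro i _
        exact mul_le_mul_of_nonneg_left (hkey i) (hρ0 i)
    _ = (∑ i, ρ i * logPartitionFn G ψ
          (fun e => if e ∈ (Tr i).edgeSet then θ e else 0)) / κ := by
        rw [div_eq_mul_inv, Finset.sum_mul]
        apply Finset.sum_congr rfl
        intro i _
        ring
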